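/- For all positive integers d ≤ n, there exists a family 𝒜 of subsets of [n] satisfying VC(𝒜 ∩ 𝒜) ≤ d, VC(𝒜 ∪ 𝒜) ≤ d, and |𝒜| > (n/d)^d. -/

import Mathlib

/-- A set `Y` is shattered by the family `F` if every subset of `Y`
is the trace of some member of `F` on `Y`. -/
def Shatters {α : Type*} [DecidableEq α] (F : Finset (Finset α)) (Y : Finset α) : Prop :=
  ∀ T ⊆ Y, ∃ S ∈ F, S ∩ Y = T

/-- The VC dimension of a family: the largest cardinality of a shattered set. -/
noncomputable def vcDim {α : Type*} [DecidableEq α] (F : Finset (Finset α)) : ℕ :=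
  sSup {m | ∃ Y : Finset α, Shatters F Y ∧ Y.card = m}

/-- `S₁ △ S₂ △ ⋯ △ S_k` for a `k`-tuple of sets. -/
def symmDiffAll {α : Type*} [DecidableEq α] {k : ℕ} (f : Fin k → Finset α) : Finset α :=
  (List.ofFn f).foldr symmDiff ∅

/-- The `k`-fold symmetric difference family `△𝒜^k`. -/
def symmDiffFam {α : Type*} [DecidableEq α] (k : ℕ) (A : Finset (Finset α)) :
    Finset (Finset α) :=
  (Fintype.piFinset fun _ : Fin k => A).image symmDiffAll

/-- The family `𝒜₁ △ ⋯ △ 𝒜ₖ`. -/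
def symmDiffFamMulti {α : Type*} [DecidableEq α] {k : ℕ} (A : Fin k → Finset (Finset α)) :
    Finset (Finset α) :=
  (Fintype.piFinset A).image symmDiffAll

/-- A family is `k`-wise `(n-d)`-union if any `k` of its members have union of size `≤ d`. -/
def KwiseUnion {α : Type*} [DecidableEq α] (k d : ℕ) (A : Finset (Finset α)) : Prop :=
  ∀ f : Fin k → Finset α, (∀ i, f i ∈ A) → (Finset.univ.sup f).card ≤ d

/-- The `i`-compression of a family. -/
def compress {α : Type*} [DecidableEq α] (i : α) (A : Finset (Finset α)) :
    Finset (Finset α) :=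
  A.image fun S => if S ∈ A ∧ S.erase i ∈ A then S else S.erase i

/-- The `(i,j)`-shift of a family. -/
def shiftIJ {α : Type*} [DecidableEq α] (i j : α) (A : Finset (Finset α)) :
    Finset (Finset α) :=
  A.image fun S => if i ∉ S ∧ j ∈ S ∧ insert i (S.erase j) ∉ A then insert i (S.erase j) else S

/-- `p(n,k,d)`: the maximum size of a `k`-wise `(n-d)`-union family on `[n]`. -/
noncomputable def pMax (n k d : ℕ) : ℕ :=
  sSup {m | ∃ F : Finset (Finset (Fin n)), KwiseUnion k d F ∧ F.card = m}

/-- The prefix-per-residue-class family member. -/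
def phiAux (n : ℕ) {d : ℕ} (hd : 0 < d) (g : Fin d → ℕ) : Finset (Fin n) :=
  Finset.univ.filter fun x => x.val / d < g ⟨x.val % d, Nat.mod_lt _ hd⟩

/-- Closed under subtracting `d`. -/
def ClosedSub (d : ℕ) {n : ℕ} (S : Finset (Fin n)) : Prop :=
  ∀ x : Fin n, x ∈ S → ∀ y : Fin n, y.val + d = x.val → y ∈ S

lemma phiAux_closed (n : ℕ) {d : ℕ} (hd : 0 < d) (g : Fin d → ℕ) :
    ClosedSub d (phiAux n hd g) := by
  intro x hx y hyx
  simp only [phiAux, Finset.mem_filter, Finset.mem_univ, true_and] at hx ⊢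
  have hmod : y.val % d = x.val % d := by rw [← hyx, Nat.add_mod_right]
  have hdiv : y.val / d ≤ x.val / d := Nat.div_le_div_right (by omega)
  have : (⟨y.val % d, Nat.mod_lt _ hd⟩ : Fin d) = ⟨x.val % d, Nat.mod_lt _ hd⟩ :=
    Fin.ext hmod
  rw [this]
  exact lt_of_le_of_lt hdiv hx

lemma closedSub_inter {n d : ℕ} {S T : Finset (Fin n)} (hS : ClosedSub d S)
    (hT : ClosedSub d T) : ClosedSub d (S ∩ T) := by
  intro x hx y hyx
  simp only [Finset.mem_inter] at hx ⊢
  exact ⟨hS x hx.1 y hyx, hT x hx.2 y hyx⟩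

lemma closedSub_union {n d : ℕ} {S T : Finset (Fin n)} (hS : ClosedSub d S)
    (hT : ClosedSub d T) : ClosedSub d (S ∪ T) := by
  intro x hx y hyx
  simp only [Finset.mem_union] at hx ⊢
  rcases hx with h | h
  · exact Or.inl (hS x h y hyx)
  · exact Or.inr (hT x h y hyx)

lemma closedSub_descend {n d : ℕ} {S : Finset (Fin n)} (hS : ClosedSub d S) :
    ∀ m : ℕ, ∀ x : Fin n, x ∈ S → ∀ y : Fin n, y.val + m * d = x.val → y ∈ S := by
  intro m
  induction m with
  | zero =>
    intro x hx y h
    have : y = x := Fin.ext (by omega)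
    rwa [this]
  | succ m ih =>
    intro x hx y h
    have hz : y.val + m * d < n := by
      have := x.isLt
      have : y.val + m * d ≤ x.val := by
        have : (m + 1) * d = m * d + d := by ring
        omega
      omega
    have hzS : (⟨y.val + m * d, hz⟩ : Fin n) ∈ S := by
      apply hS x hx
      simp only []
      have : (m + 1) * d = m * d + d := by ring
      omega
    exact ih ⟨y.val + m * d, hz⟩ hzS y rfl

lemma shatter_card_le {n d : ℕ} (hd : 0 < d) {F : Finset (Finset (Fin n))}
    (hF : ∀ S ∈ F, ClosedSub d S) {Y : Finset (Fin n)} (hY : Shatters F Y) :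
    Y.card ≤ d := by
  by_contra hcard
  push_neg at hcard
  have key : ∀ x ∈ Y, ∀ y ∈ Y, y.val < x.val → x.val % d = y.val % d → False := by
    intro x hx y hy hlt hmod
    obtain ⟨S, hSF, hS⟩ := hY {x} (Finset.singleton_subset_iff.mpr hx)
    have hxS : x ∈ S := by
      have : x ∈ S ∩ Y := by rw [hS]; exact Finset.mem_singleton_self x
      exact (Finset.mem_inter.mp this).1
    -- find m with y.val + m * d = x.val
    have hble : y.val / d ≤ x.val / d := Nat.div_le_div_right (le_of_lt hlt)
    have hm : y.val + (x.val / d - y.val / d) * d = x.val := by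
      have h1 : d * (x.val / d) + x.val % d = x.val := Nat.div_add_mod _ _
      have h2 : d * (y.val / d) + y.val % d = y.val := Nat.div_add_mod _ _
      have h3 : (x.val / d - y.val / d) * d = (x.val / d) * d - (y.val / d) * d :=
        Nat.sub_mul _ _ _
      have h4 : (y.val / d) * d ≤ (x.val / d) * d := Nat.mul_le_mul_right _ hble
      have h5 : (x.val / d) * d = d * (x.val / d) := Nat.mul_comm _ _
      have h6 : (y.val / d) * d = d * (y.val / d) := Nat.mul_comm _ _
      omega
    have hyS : y ∈ S := closedSub_descend (hF S hSF) _ x hxS y hm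
    have : y ∈ S ∩ Y := Finset.mem_inter.mpr ⟨hyS, hy⟩
    rw [hS] at this
    have : y = x := Finset.mem_singleton.mp this
    omega
  obtain ⟨x, hx, y, hy, hne, hmap⟩ :=
    Finset.exists_ne_map_eq_of_card_lt_of_maps_to
      (s := Y) (t := (Finset.univ : Finset (Fin d)))
      (f := fun a => (⟨a.val % d, Nat.mod_lt _ hd⟩ : Fin d))
      (by simpa using hcard) (fun a _ => Finset.mem_univ _)
  have hmod : x.val % d = y.val % d := congrArg Fin.val hmap
  have hvne : x.val ≠ y.val := fun h => hne (Fin.ext h)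
  rcases Nat.lt_or_ge x.val y.val with h | h
  · exact key y hy x hx h hmod.symm
  · exact key x hx y hy (lt_of_le_of_ne h (Ne.symm hvne)) hmod

lemma vcDim_le_of_closedSub {n d : ℕ} (hd : 0 < d) {F : Finset (Finset (Fin n))}
    (hF : ∀ S ∈ F, ClosedSub d S) : vcDim F ≤ d := by
  apply csSup_le'
  rintro m ⟨Y, hY, rfl⟩
  exact shatter_card_le hd hF hY

lemma phiAux_inj {n d : ℕ} (hd : 0 < d) (hdn : d ≤ n) :
    Function.Injective (fun g : Fin d → Fin (n / d + 1) =>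
      phiAux n hd (fun r => (g r).val)) := by
  set q := n / d with hq
  have hq1 : 1 ≤ q := (Nat.one_le_div_iff hd).mpr hdn
  have key : ∀ g g' : Fin d → Fin (q + 1),
      phiAux n hd (fun r => (g r).val) = phiAux n hd (fun r => (g' r).val) →
      ∀ r : Fin d, (g r).val < (g' r).val → False := by
    intro g g' hgg r hr
    set u := (g r).val with hu
    have hu1 : u + 1 ≤ q := by
      have := (g' r).isLt
      omega
    have hqd : q * d ≤ n := Nat.div_mul_le_self n d
    have hud : (u + 1) * d ≤ q * d := Nat.mul_le_mul_right _ hu1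
    have hxlt : r.val + u * d < n := by
      have hrd := r.isLt
      have : (u + 1) * d = u * d + d := by ring
      omega
    set x : Fin n := ⟨r.val + u * d, hxlt⟩ with hx
    have hmod : x.val % d = r.val := by
      simp only [hx, Nat.add_mul_mod_self_right]
      exact Nat.mod_eq_of_lt r.isLt
    have hdiv : x.val / d = u := by
      simp only [hx]
      rw [Nat.add_mul_div_right _ _ hd, Nat.div_eq_of_lt r.isLt]
      omega
    have hblock : (⟨x.val % d, Nat.mod_lt _ hd⟩ : Fin d) = r := Fin.ext hmod
    have hmem' : x ∈ phiAux n hd (fun r => (g' r).val) := by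
      simp only [phiAux, Finset.mem_filter, Finset.mem_univ, true_and, hblock, hdiv]
      exact hr
    rw [← hgg] at hmem'
    simp only [phiAux, Finset.mem_filter, Finset.mem_univ, true_and, hblock, hdiv] at hmem'
    omega
  intro g g' hgg
  by_contra hne
  obtain ⟨r, hr⟩ := Function.ne_iff.mp hne
  have hvne : (g r).val ≠ (g' r).val := fun h => hr (Fin.ext h)
  rcases Nat.lt_or_ge (g r).val (g' r).val with h | h
  · exact key g g' hgg r h
  · exact key g' g hgg.symm r (lt_of_le_of_ne h (Ne.symm hvne))


/-- for positive `d ≤ n` there is a family `𝒜 ⊆ 2^[n]` with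
`VC(𝒜 ∩ 𝒜) ≤ d`, `VC(𝒜 ∪ 𝒜) ≤ d` and `|𝒜| > (n/d)^d`. -/
theorem statement13 (n d : ℕ) (hd : 0 < d) (hdn : d ≤ n) :
    ∃ A : Finset (Finset (Fin n)),
      vcDim (Finset.image₂ (fun S T => S ∩ T) A A) ≤ d ∧
      vcDim (Finset.image₂ (fun S T => S ∪ T) A A) ≤ d ∧
      ((n : ℝ) / (d : ℝ)) ^ d < (A.card : ℝ) := by
  set q := n / d with hq
  set Φ : (Fin d → Fin (q + 1)) → Finset (Fin n) :=
    fun g => phiAux n hd (fun r => (g r).val) with hΦ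
  refine ⟨Finset.image Φ Finset.univ, ?_, ?_, ?_⟩
  · apply vcDim_le_of_closedSub hd
    intro S hS
    rw [Finset.mem_image₂] at hS
    obtain ⟨S₁, h₁, S₂, h₂, rfl⟩ := hS
    obtain ⟨g₁, -, rfl⟩ := Finset.mem_image.mp h₁
    obtain ⟨g₂, -, rfl⟩ := Finset.mem_image.mp h₂
    exact closedSub_inter (phiAux_closed n hd _) (phiAux_closed n hd _)
  · apply vcDim_le_of_closedSub hd
    intro S hS
    rw [Finset.mem_image₂] at hS
    obtain ⟨S₁, h₁, S₂, h₂, rfl⟩ := hS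
    obtain ⟨g₁, -, rfl⟩ := Finset.mem_image.mp h₁
    obtain ⟨g₂, -, rfl⟩ := Finset.mem_image.mp h₂
    exact closedSub_union (phiAux_closed n hd _) (phiAux_closed n hd _)
  · have hcard : (Finset.image Φ Finset.univ).card = (q + 1) ^ d := by
      rw [Finset.card_image_of_injective _ (phiAux_inj hd hdn), Finset.card_univ]
      simp [Fintype.card_fun, hq]
    rw [hcard]
    have hlt : (n : ℝ) / (d : ℝ) < ((q + 1 : ℕ) : ℝ) := by
      rw [div_lt_iff₀ (by exact_mod_cast hd)]
      have h1 : d * q + n % d = n := Nat.div_add_mod n d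
      have h2 : n % d < d := Nat.mod_lt _ hd
      have : n < (q + 1) * d := by
        have : (q + 1) * d = d * q + d := by ring
        omega
      exact_mod_cast this
    calc ((n : ℝ) / (d : ℝ)) ^ d < (((q + 1 : ℕ) : ℝ)) ^ d :=
          pow_lt_pow_left₀ hlt (by positivity) (by omega : d ≠ 0)
      _ = (((q + 1) ^ d : ℕ) : ℝ) := by push_cast; ring
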